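/- Let E be a real Banach space, D ⊆ E* a weak*-compact convex set with 0 ∉ D, and B ⊆ E* a set such that for every x ∈ L_D there is b* ∈ B with ⟨x,b*⟩ = sup{⟨x,z*⟩ : z* ∈ B}. If B ⊆ ∪_{n=1}^∞ K_n for some sequence (K_n) of weak*-compact convex subsets of the weak*-closed convex hull of B, then the weak*-closed convex hull of B is contained in the norm closure of co(∪_{n=1}^∞ K_n) + Λ_D. -/

import Mathlib

open Filter Topology Pointwise

/-- `L_D`: for nonempty `D`, the set of `x ∈ E` with `sup_{d* ∈ D} ⟨x, d*⟩ < 0`;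
for `D = ∅`, the set `E \ {0}`. -/
def LD {E : Type*} [NormedAddCommGroup E] [NormedSpace ℝ E]
    (D : Set (StrongDual ℝ E)) : Set E :=
  {x | (D = ∅ ∧ x ≠ 0) ∨ (D.Nonempty ∧ ∃ r < (0 : ℝ), ∀ d ∈ D, d x ≤ r)}

/-- `Λ_D = {0} ∪ {λ d* : λ > 0, d* ∈ D}`, the cone generated by `D`. -/
def LambdaD {E : Type*} [NormedAddCommGroup E] [NormedSpace ℝ E]
    (D : Set (StrongDual ℝ E)) : Set (StrongDual ℝ E) :=
  {0} ∪ {z | ∃ l : ℝ, 0 < l ∧ ∃ d ∈ D, z = l • d}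

/-- The weak*-closed convex hull of a subset of the dual space. -/
def wStarClosedConvexHull {E : Type*} [NormedAddCommGroup E] [NormedSpace ℝ E]
    (B : Set (StrongDual ℝ E)) : Set (StrongDual ℝ E) :=
  StrongDual.toWeakDual ⁻¹'
    (closure (StrongDual.toWeakDual '' (convexHull ℝ B)))

/- ### Auxiliary lemmas -/

section Aux

variable {E : Type*} [NormedAddCommGroup E] [NormedSpace ℝ E]

instance : LocallyConvexSpace ℝ (WeakDual ℝ E) :=
  WeakBilin.locallyConvexSpace (B := topDualPairing ℝ E)

/-- evaluation at a point, as a linear functional on the weak dual -/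
noncomputable def evalWD (y : E) : WeakDual ℝ E →ₗ[ℝ] ℝ where
  toFun z := z y
  map_add' _ _ := rfl
  map_smul' _ _ := rfl

theorem exists_eval_rep (f : WeakDual ℝ E →L[ℝ] ℝ) :
    ∃ x : E, ∀ z : WeakDual ℝ E, f z = z x := by
  have hnb : f ⁻¹' Metric.ball (0:ℝ) 1 ∈ 𝓝 (0 : WeakDual ℝ E) := by
    have := f.continuous.continuousAt (x := (0 : WeakDual ℝ E))
    apply this.preimage_mem_nhds
    rw [map_zero]
    exact Metric.ball_mem_nhds _ one_pos
  replace hnb := (LinearMap.hasBasis_weakBilin (topDualPairing ℝ E)).mem_iff.mp hnb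
  obtain ⟨U, hU, hUsub⟩ := hnb
  obtain ⟨s, r, hr, rfl⟩ := (SeminormFamily.basisSets_iff _).mp hU
  simp only [id] at hUsub
  have hker : (⨅ y : s, LinearMap.ker (evalWD (E := E) (y : E))) ≤
      LinearMap.ker (f.toLinearMap) := by
    intro z hz
    simp only [Submodule.mem_iInf, LinearMap.mem_ker] at hz ⊢
    have hz0 : ∀ t : ℝ, t • z ∈
        (s.sup (LinearMap.toSeminormFamily (topDualPairing ℝ E))).ball 0 r := by
      intro t
      refine (Seminorm.mem_ball_zero (p := s.sup (LinearMap.toSeminormFamily (topDualPairing ℝ E)))).mpr ?_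
      have : ∀ y ∈ s, (LinearMap.toSeminormFamily (topDualPairing ℝ E) y) (t • z) < r := by
        intro y hy
        have hzy : z y = 0 := hz ⟨y, hy⟩
        have h1 : (LinearMap.toSeminormFamily (topDualPairing ℝ E) y) (t • z) = ‖(t • z) y‖ := rfl
        rw [h1]
        have h2 : (t • z) y = t * z y := rfl
        rw [h2, hzy, mul_zero, norm_zero]
        exact hr
      exact Seminorm.finset_sup_apply_lt hr this
    have habs : ∀ t : ℝ, |t| * |f z| < 1 := by
      intro t
      have := hUsub (hz0 t)
      change f (t • z) ∈ Metric.ball (0:ℝ) 1 at this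
      simp only [Set.mem_preimage, Metric.mem_ball, dist_zero_right] at this
      rw [map_smul] at this
      simpa [abs_mul] using this
    by_contra hfz
    have hpos : 0 < |f z| := abs_pos.mpr hfz
    have := habs (2 / |f z|)
    rw [abs_div] at this
    simp only [abs_abs] at this
    rw [div_mul_cancel₀] at this
    · norm_num at this
    · exact ne_of_gt hpos
  have hspan := mem_span_of_iInf_ker_le_ker (L := fun y : s => evalWD (E := E) (y : E)) hker
  rw [Submodule.mem_span_range_iff_exists_fun] at hspan
  obtain ⟨c, hc⟩ := hspan
  refine ⟨∑ y : s, c y • (y : E), fun z => ?_⟩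
  have := LinearMap.congr_fun hc z
  simp only [LinearMap.coe_sum, Finset.sum_apply, LinearMap.smul_apply] at this
  rw [show f z = ∑ x : s, c x • (evalWD (E := E) (x : E)) z from this.symm]
  have : z (∑ y : s, c y • (y : E)) = ∑ y : s, c y * z (y : E) := by
    rw [map_sum]
    congr 1; ext y
    exact map_smul z _ _
  rw [this]
  rfl

theorem isCompact_convexJoin {X : Type*} [AddCommGroup X] [Module ℝ X] [TopologicalSpace X]
    [ContinuousAdd X] [ContinuousSMul ℝ X] {s t : Set X}
    (hs : IsCompact s) (ht : IsCompact t) : IsCompact (convexJoin ℝ s t) := by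
  have heq : convexJoin ℝ s t = (fun p : (ℝ × X × X) => (1 - p.1) • p.2.1 + p.1 • p.2.2) ''
      ((Set.Icc (0:ℝ) 1) ×ˢ (s ×ˢ t)) := by
    ext z
    constructor
    · intro hz
      rw [mem_convexJoin] at hz
      obtain ⟨a, ha, b, hb, hab⟩ := hz
      rw [segment_eq_image ℝ] at hab
      obtain ⟨θ, hθ, hzeq⟩ := hab
      exact ⟨(θ, a, b), ⟨hθ, ha, hb⟩, hzeq⟩
    · rintro ⟨⟨θ, a, b⟩, ⟨hθ, ha, hb⟩, rfl⟩
      rw [mem_convexJoin]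
      exact ⟨a, ha, b, hb, (segment_eq_image ℝ a b) ▸ ⟨θ, hθ, rfl⟩⟩
  rw [heq]
  apply IsCompact.image (isCompact_Icc.prod (hs.prod ht))
  fun_prop

theorem isCompact_convexHull_finite_union {X : Type*} [AddCommGroup X] [Module ℝ X]
    [TopologicalSpace X] [ContinuousAdd X] [ContinuousSMul ℝ X] (S : ℕ → Set X)
    (hcpt : ∀ i, IsCompact (S i)) (hne : ∀ i, (S i).Nonempty) (hconv : ∀ i, Convex ℝ (S i))
    (N : ℕ) :
    IsCompact (convexHull ℝ (⋃ i ∈ Finset.range (N + 1), S i)) ∧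
      (⋃ i ∈ Finset.range (N + 1), S i).Nonempty := by
  induction N with
  | zero =>
    have h0 : (⋃ i ∈ Finset.range 1, S i) = S 0 := by
      simp
    rw [h0, (hconv 0).convexHull_eq]
    exact ⟨hcpt 0, hne 0⟩
  | succ n ih =>
    have hsplit : (⋃ i ∈ Finset.range (n + 1 + 1), S i) =
        S (n + 1) ∪ ⋃ i ∈ Finset.range (n + 1), S i := by
      rw [Finset.range_add_one]
      ext z
      simp [or_comm]
    rw [hsplit]
    constructor
    · rw [convexHull_union (hne (n+1)) ih.2, (hconv (n+1)).convexHull_eq]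
      exact isCompact_convexJoin (hcpt (n+1)) ih.1
    · exact (hne (n+1)).mono (Set.subset_union_left.trans (subset_refl _))

/-- A convergent countable convex combination of elements of a closed convex set
belongs to the set. -/
theorem tsum_smul_mem_of_closed_convex {E : Type*} [NormedAddCommGroup E] [NormedSpace ℝ E]
    {V : Set E} (hVc : Convex ℝ V) (hVcl : IsClosed V) {a : ℕ → E} (ha : ∀ j, a j ∈ V)
    {d : ℕ → ℝ} (hd0 : ∀ j, 0 ≤ d j) (hdsum : Summable d) (hd1 : ∑' j, d j = 1)
    (hsum : Summable fun j => d j • a j) : (∑' j, d j • a j) ∈ V := by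
  have hex : ∃ j₀, 0 < d j₀ := by
    by_contra h
    push_neg at h
    have : ∀ j, d j = 0 := fun j => le_antisymm (h j) (hd0 j)
    rw [tsum_congr (fun j => this j)] at hd1
    simp at hd1
  obtain ⟨j₀, hj₀⟩ := hex
  set L := ∑' j, d j • a j with hL
  have hpartial : Tendsto (fun m => ∑ j ∈ Finset.range m, d j) atTop (𝓝 1) := by
    rw [← hd1]
    exact hdsum.hasSum.tendsto_sum_nat
  have hpartialv : Tendsto (fun m => ∑ j ∈ Finset.range m, d j • a j) atTop (𝓝 L) :=
    hsum.hasSum.tendsto_sum_nat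
  have hinv : Tendsto (fun m => (∑ j ∈ Finset.range m, d j)⁻¹) atTop (𝓝 1) := by
    have := hpartial.inv₀ (one_ne_zero)
    simpa using this
  have htend : Tendsto (fun m => (∑ j ∈ Finset.range m, d j)⁻¹ •
      (∑ j ∈ Finset.range m, d j • a j)) atTop (𝓝 L) := by
    have := hinv.smul hpartialv
    simpa using this
  refine hVcl.mem_of_tendsto htend ?_
  filter_upwards [eventually_ge_atTop (j₀ + 1)] with m hm
  have hspos : 0 < ∑ j ∈ Finset.range m, d j := by
    have : d j₀ ≤ ∑ j ∈ Finset.range m, d j :=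
      Finset.single_le_sum (fun j _ => hd0 j) (Finset.mem_range.mpr (by omega))
    linarith
  have heq : (∑ j ∈ Finset.range m, d j)⁻¹ • (∑ j ∈ Finset.range m, d j • a j) =
      ∑ j ∈ Finset.range m, ((∑ i ∈ Finset.range m, d i)⁻¹ * d j) • a j := by
    rw [Finset.smul_sum]
    congr 1
    ext j
    rw [smul_smul]
  rw [heq]
  apply hVc.sum_mem
  · intro j _
    exact mul_nonneg (inv_nonneg.mpr hspos.le) (hd0 j)
  · rw [← Finset.mul_sum]
    field_simp
  · intro j _
    exact ha j

end Aux

theorem lambdaD_convex {E : Type*} [NormedAddCommGroup E] [NormedSpace ℝ E]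
    {D : Set (StrongDual ℝ E)} (hDconv : Convex ℝ D) : Convex ℝ (LambdaD D) := by
  rintro z₁ hz₁ z₂ hz₂ a b ha hb hab
  rcases hz₁ with hz₁ | ⟨l₁, hl₁, d₁, hd₁, rfl⟩ <;>
    rcases hz₂ with hz₂ | ⟨l₂, hl₂, d₂, hd₂, rfl⟩
  · simp only [Set.mem_singleton_iff] at hz₁ hz₂
    subst hz₁; subst hz₂
    left; simp
  · simp only [Set.mem_singleton_iff] at hz₁
    subst hz₁
    rcases eq_or_lt_of_le hb with hb0 | hb0
    · left; simp [← hb0]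
    · right
      exact ⟨b * l₂, by positivity, d₂, hd₂, by rw [smul_smul]; simp⟩
  · simp only [Set.mem_singleton_iff] at hz₂
    subst hz₂
    rcases eq_or_lt_of_le ha with ha0 | ha0
    · left; simp [← ha0]
    · right
      exact ⟨a * l₁, by positivity, d₁, hd₁, by rw [smul_smul]; simp⟩
  · right
    have hcpos : 0 < a * l₁ + b * l₂ := by
      rcases eq_or_lt_of_le ha with ha0 | ha0
      · have hb1 : b = 1 := by linarith
        rw [← ha0, hb1]; simpa using hl₂
      · nlinarith
    have hsum1 : a * l₁ / (a * l₁ + b * l₂) + b * l₂ / (a * l₁ + b * l₂) = 1 := by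
      rw [← add_div, div_self (ne_of_gt hcpos)]
    refine ⟨a * l₁ + b * l₂, hcpos,
      (a * l₁ / (a * l₁ + b * l₂)) • d₁ + (b * l₂ / (a * l₁ + b * l₂)) • d₂,
      hDconv hd₁ hd₂ (by positivity) (by positivity) hsum1, ?_⟩
    have hc1 : (a * l₁ + b * l₂) * (a * l₁ / (a * l₁ + b * l₂)) = a * l₁ := by
      field_simp
    have hc2 : (a * l₁ + b * l₂) * (b * l₂ / (a * l₁ + b * l₂)) = b * l₂ := by
      field_simp
    rw [smul_add, smul_smul, smul_smul, smul_smul, smul_smul, hc1, hc2]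


set_option maxHeartbeats 3000000 in
set_option synthInstance.maxHeartbeats 200000 in
/-- One-side (I)-generation: let `D ⊆ E*` be weak*-compact convex with `0 ∉ D` and let
`B ⊆ E*` be such that every `x ∈ L_D` attains its supremum over `B` at a point of `B`.
If `B ⊆ ⋃ₙ Kₙ` for weak*-compact convex subsets `Kₙ` of the weak*-closed convex hull of
`B`, then this hull is contained in the norm closure of `co(⋃ₙ Kₙ) + Λ_D`. -/
theorem one_side_I_generation
    {E : Type*} [NormedAddCommGroup E] [NormedSpace ℝ E] [CompleteSpace E]
    (D : Set (StrongDual ℝ E))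
    (hDcpt : IsCompact (StrongDual.toWeakDual '' D)) (hDconv : Convex ℝ D)
    (hD0 : (0 : StrongDual ℝ E) ∉ D)
    (B : Set (StrongDual ℝ E))
    (hbd : ∀ x ∈ LD D, ∃ b ∈ B, ∀ z ∈ B, z x ≤ b x)
    (K : ℕ → Set (StrongDual ℝ E))
    (hKcpt : ∀ n, IsCompact (StrongDual.toWeakDual '' K n))
    (hKconv : ∀ n, Convex ℝ (K n))
    (hKsub : ∀ n, K n ⊆ wStarClosedConvexHull B)
    (hcover : B ⊆ ⋃ n, K n) :
    wStarClosedConvexHull B ⊆ closure (convexHull ℝ (⋃ n, K n) + LambdaD D) := by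
  classical
  intro w hw
  by_contra hwC
  -- `B` is nonempty
  have hBne : B.Nonempty := by
    rcases B.eq_empty_or_nonempty with hB | hB
    · exfalso
      rw [wStarClosedConvexHull, hB] at hw
      simp only [convexHull_empty, Set.image_empty, closure_empty, Set.preimage_empty,
        Set.mem_empty_iff_false] at hw
    · exact hB
  obtain ⟨b₀, hb₀⟩ := hBne
  obtain ⟨m₀, hm₀⟩ : ∃ m, b₀ ∈ K m := by simpa using hcover hb₀
  -- the hull-majorization property of `w`
  have hWmaj : ∀ (z : E) (c : ℝ), (∀ y ∈ B, y z ≤ c) → w z ≤ c := by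
    intro z c hyc
    have hlin : IsLinearMap ℝ (fun y : StrongDual ℝ E => y z) :=
      ⟨fun a b => ContinuousLinearMap.add_apply a b z,
        fun c' a => ContinuousLinearMap.smul_apply a c' z⟩
    have hclosed : IsClosed {y : WeakDual ℝ E | y z ≤ c} :=
      isClosed_le (WeakDual.eval_continuous z) continuous_const
    have hsub : StrongDual.toWeakDual '' (convexHull ℝ B) ⊆
        {y : WeakDual ℝ E | y z ≤ c} := by
      rintro _ ⟨y, hy, rfl⟩
      have hhull : convexHull ℝ B ⊆ {y : StrongDual ℝ E | y z ≤ c} :=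
        convexHull_min (fun y hy => hyc y hy) (convex_halfSpace_le hlin c)
      exact hhull hy
    exact closure_minimal hsub hclosed hw
  -- basic facts about the target set
  have h0Λ : (0 : StrongDual ℝ E) ∈ LambdaD D := Or.inl rfl
  have hb₀hull : b₀ ∈ convexHull ℝ (⋃ n, K n) :=
    subset_convexHull ℝ _ (Set.mem_iUnion.mpr ⟨m₀, hm₀⟩)
  have hCne : (closure (convexHull ℝ (⋃ n, K n) + LambdaD D)).Nonempty :=
    ⟨b₀ + 0, subset_closure (Set.add_mem_add hb₀hull h0Λ)⟩
  set ε := Metric.infDist w (closure (convexHull ℝ (⋃ n, K n) + LambdaD D)) with hεdef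
  have hε : 0 < ε := (isClosed_closure.notMem_iff_infDist_pos hCne).mp hwC
  have hdistC : ∀ p ∈ convexHull ℝ (⋃ n, K n), ∀ l ∈ LambdaD D, ε ≤ ‖w - (p + l)‖ := by
    intro p hp l hl
    rw [← dist_eq_norm]
    exact Metric.infDist_le_dist_of_mem (subset_closure (Set.add_mem_add hp hl))
  -- the sets A i and P n
  set A : ℕ → Set (StrongDual ℝ E) := fun i => if (K i).Nonempty then K i else {b₀}
    with hAdef
  have hKA : ∀ i, K i ⊆ A i := by
    intro i
    by_cases h : (K i).Nonempty
    · simp [hAdef, h]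
    · rw [Set.not_nonempty_iff_eq_empty] at h
      simp [hAdef, h]
  have hAne : ∀ i, (A i).Nonempty := by
    intro i
    by_cases h : (K i).Nonempty <;> simp [hAdef, h]
  have hAconv : ∀ i, Convex ℝ (A i) := by
    intro i
    by_cases h : (K i).Nonempty
    · simpa [hAdef, h] using hKconv i
    · simp [hAdef, h, convex_singleton]
  have hAcpt : ∀ i, IsCompact (StrongDual.toWeakDual '' A i) := by
    intro i
    by_cases h : (K i).Nonempty
    · simpa [hAdef, h] using hKcpt i
    · simp only [hAdef, h, if_false]
      rw [Set.image_singleton]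
      exact isCompact_singleton
  have hAsub : ∀ i, A i ⊆ ⋃ n, K n := by
    intro i
    by_cases h : (K i).Nonempty
    · simp only [hAdef, h, if_true]
      exact Set.subset_iUnion K i
    · simp only [hAdef, h, if_false]
      exact Set.singleton_subset_iff.mpr (Set.mem_iUnion.mpr ⟨m₀, hm₀⟩)
  set P : ℕ → Set (StrongDual ℝ E) :=
    fun n => convexHull ℝ (⋃ i ∈ Finset.range (n + m₀ + 1), A i) with hPdef
  have hPsub : ∀ n, P n ⊆ convexHull ℝ (⋃ n, K n) := by
    intro n
    apply convexHull_min ?_ (convex_convexHull ℝ _)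
    intro z hz
    simp only [Set.mem_iUnion] at hz
    obtain ⟨i, _, hzi⟩ := hz
    exact subset_convexHull ℝ _ (hAsub i hzi)
  have hKP : ∀ m n, m ≤ n + m₀ → K m ⊆ P n := by
    intro m n h z hz
    apply subset_convexHull
    exact Set.mem_biUnion (Finset.mem_range.mpr (by omega)) (hKA m hz)
  have hb₀P : ∀ n, b₀ ∈ P n := by
    intro n
    apply subset_convexHull
    exact Set.mem_biUnion (Finset.mem_range.mpr (show m₀ < n + m₀ + 1 by omega)) (hKA m₀ hm₀)
  have hPconv : ∀ n, Convex ℝ (P n) := fun n => convex_convexHull ℝ _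
  have hPcpt : ∀ n, IsCompact (StrongDual.toWeakDual '' P n) := by
    intro n
    have himg : StrongDual.toWeakDual '' P n =
        convexHull ℝ (⋃ i ∈ Finset.range (n + m₀ + 1),
          StrongDual.toWeakDual '' A i) := by
      rw [hPdef]
      have h1 := (StrongDual.toWeakDual (𝕜 := ℝ) (E := E)).toLinearMap.image_convexHull
        (⋃ i ∈ Finset.range (n + m₀ + 1), A i)
      simp only [LinearEquiv.coe_coe] at h1
      rw [h1]
      congr 1
      simp [Set.image_iUnion]
    rw [himg]
    exact (isCompact_convexHull_finite_union
      (fun i => StrongDual.toWeakDual '' A i) hAcpt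
      (fun i => (hAne i).image _)
      (fun i => (hAconv i).linear_image
        (StrongDual.toWeakDual (𝕜 := ℝ) (E := E)).toLinearMap) (n + m₀)).1
  -- construction of e and δ
  obtain ⟨e, δ, hδpos, hedD⟩ :
      ∃ (e : E) (δ : ℝ), 0 < δ ∧ ∀ d ∈ D, d e ≤ -δ := by
    rcases D.eq_empty_or_nonempty with hD | hD
    · exact ⟨0, 1, one_pos, by simp [hD]⟩
    · have hDconv' : Convex ℝ (StrongDual.toWeakDual '' D) :=
        hDconv.linear_image _
      have hDcl : IsClosed (StrongDual.toWeakDual '' D) := hDcpt.isClosed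
      have h0D : (0 : WeakDual ℝ E) ∉ StrongDual.toWeakDual '' D := by
        rintro ⟨d, hd, hd0⟩
        apply hD0
        have hinj : d = 0 := by
          apply StrongDual.toWeakDual.injective
          simpa using hd0
        rwa [hinj] at hd
      obtain ⟨f, u, hfu, hub⟩ := geometric_hahn_banach_point_closed hDconv' hDcl h0D
      obtain ⟨e₀, he₀⟩ := exists_eval_rep f
      have hu0 : 0 < u := by simpa using hfu
      refine ⟨-e₀, u, hu0, ?_⟩
      intro d hd
      have h1 := hub _ ⟨d, hd, rfl⟩
      rw [he₀] at h1
      have h2 : u < d e₀ := h1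
      rw [map_neg]
      linarith
  have hΛconv : Convex ℝ (LambdaD D) := lambdaD_convex hDconv
  have hΛconv' : Convex ℝ (StrongDual.toWeakDual '' LambdaD D) :=
    hΛconv.linear_image (StrongDual.toWeakDual (𝕜 := ℝ) (E := E)).toLinearMap
  -- closedness of the image of LambdaD
  have hΛcl : IsClosed (StrongDual.toWeakDual '' LambdaD D) := by
    rcases D.eq_empty_or_nonempty with hD | hD
    · have hΛeq : LambdaD D = {0} := by
        rw [LambdaD, hD]
        ext z
        simp
      rw [hΛeq, Set.image_singleton, map_zero]
      exact isClosed_singleton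
    · apply isClosed_of_closure_subset
      intro z hz
      set c : ℝ := z e - 1 with hc
      have hUopen : IsOpen {y : WeakDual ℝ E | c < y e} :=
        isOpen_lt continuous_const (WeakDual.eval_continuous e)
      have hzU : z ∈ {y : WeakDual ℝ E | c < y e} := by
        simp only [Set.mem_setOf_eq, hc]
        linarith
      have hz2 : z ∈ closure ({y : WeakDual ℝ E | c < y e} ∩
          (StrongDual.toWeakDual '' LambdaD D)) :=
        hUopen.inter_closure ⟨hzU, hz⟩
      set R := max ((-c) / δ) 0 + 1 with hR
      have hsub : {y : WeakDual ℝ E | c < y e} ∩ (StrongDual.toWeakDual '' LambdaD D) ⊆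
          (fun p : ℝ × WeakDual ℝ E => p.1 • p.2) ''
            (Set.Icc 0 R ×ˢ (StrongDual.toWeakDual '' D)) ∪ {0} := by
        rintro y ⟨hyU, ⟨l, hl, rfl⟩⟩
        rcases hl with hl0 | ⟨lam, hlam, d, hd, rfl⟩
        · simp only [Set.mem_singleton_iff] at hl0
          subst hl0
          right; simp
        · left
          have happ : (StrongDual.toWeakDual (lam • d)) e = lam * d e := rfl
          have h2 : d e ≤ -δ := hedD d hd
          have h3 : c < lam * d e := by
            have := hyU
            rwa [Set.mem_setOf_eq, happ] at this
          have h4 : lam * d e ≤ lam * (-δ) := mul_le_mul_of_nonneg_left h2 hlam.le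
          have h5 : lam < (-c) / δ := by
            rw [lt_div_iff₀ hδpos]
            nlinarith
          have h6 : lam ≤ R := by
            have := le_max_left ((-c)/δ) 0
            rw [hR]; linarith
          refine ⟨(lam, StrongDual.toWeakDual d), ⟨⟨hlam.le, h6⟩, ⟨d, hd, rfl⟩⟩, ?_⟩
          simp [map_smul]
      have hcptF : IsCompact ((fun p : ℝ × WeakDual ℝ E => p.1 • p.2) ''
          (Set.Icc 0 R ×ˢ (StrongDual.toWeakDual '' D))) :=
        (isCompact_Icc.prod hDcpt).image continuous_smul
      have hclF : IsClosed ((fun p : ℝ × WeakDual ℝ E => p.1 • p.2) ''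
          (Set.Icc 0 R ×ˢ (StrongDual.toWeakDual '' D)) ∪ {0}) :=
        hcptF.isClosed.union isClosed_singleton
      have hzF := closure_minimal hsub hclF hz2
      rcases hzF with ⟨p, ⟨⟨hlam0, _⟩, ⟨d, hd, hd2⟩⟩, hpz⟩ | hz0
      · rcases eq_or_lt_of_le hlam0 with hlam | hlam
        · refine ⟨0, Or.inl rfl, ?_⟩
          rw [map_zero, ← hpz]
          show (0 : WeakDual ℝ E) = p.1 • p.2
          rw [← hlam, zero_smul]
        · refine ⟨p.1 • d, Or.inr ⟨p.1, hlam, d, hd, rfl⟩, ?_⟩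
          rw [map_smul, hd2]
          exact hpz
      · simp only [Set.mem_singleton_iff] at hz0
        exact ⟨0, Or.inl rfl, by rw [map_zero, hz0]⟩
  -- the weak* closed ball
  have hBallcpt : IsCompact (WeakDual.toStrongDual ⁻¹'
      Metric.closedBall (0 : StrongDual ℝ E) (ε/2)) :=
    WeakDual.isCompact_closedBall (𝕜 := ℝ) 0 (ε/2)
  have hBallconv : Convex ℝ (WeakDual.toStrongDual ⁻¹'
      Metric.closedBall (0 : StrongDual ℝ E) (ε/2)) :=
    (convex_closedBall (0 : StrongDual ℝ E) (ε/2)).linear_preimage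
      (WeakDual.toStrongDual (𝕜 := ℝ) (E := E)).toLinearMap
  have hBallmem : ∀ g : StrongDual ℝ E, ‖g‖ ≤ ε/2 →
      StrongDual.toWeakDual g ∈ WeakDual.toStrongDual ⁻¹'
        Metric.closedBall (0 : StrongDual ℝ E) (ε/2) := by
    intro g hg
    simp only [Set.mem_preimage, Metric.mem_closedBall, dist_zero_right]
    have : WeakDual.toStrongDual (StrongDual.toWeakDual g) = g :=
      StrongDual.toWeakDual.symm_apply_apply g
    rw [this]
    exact hg
  -- the separating functionals
  have hsep : ∀ n : ℕ, ∃ x : E, ‖x‖ = 1 ∧ (∀ p ∈ P n, p x ≤ w x - ε/2) ∧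
      (∀ d ∈ D, d x ≤ 0) := by
    intro n
    set Ball := WeakDual.toStrongDual ⁻¹'
      Metric.closedBall (0 : StrongDual ℝ E) (ε/2) with hBalldef
    set Nn := (StrongDual.toWeakDual '' P n + Ball) +
      StrongDual.toWeakDual '' LambdaD D with hNdef
    have hNcl : IsClosed Nn := hΛcl.add_left_of_isCompact ((hPcpt n).add hBallcpt)
    have hNconv : Convex ℝ Nn :=
      (((hPconv n).linear_image
        (StrongDual.toWeakDual (𝕜 := ℝ) (E := E)).toLinearMap).add hBallconv).add hΛconv'
    have hwN : StrongDual.toWeakDual w ∉ Nn := by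
      intro hmem
      rw [hNdef] at hmem
      obtain ⟨pb, hpb, l', hl', heq⟩ := Set.mem_add.mp hmem
      obtain ⟨p', hp', zb, hzb, heq2⟩ := Set.mem_add.mp hpb
      obtain ⟨p, hp, rfl⟩ := hp'
      obtain ⟨l, hl, rfl⟩ := hl'
      set g := WeakDual.toStrongDual zb with hg
      have hzg : zb = StrongDual.toWeakDual g :=
        (StrongDual.toWeakDual.apply_symm_apply zb).symm
      have hgnorm : ‖g‖ ≤ ε / 2 := by
        have := hzb
        rw [hBalldef] at this
        simpa [hg, dist_zero_right] using this
      have hw_eq : w = p + g + l := by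
        apply StrongDual.toWeakDual.injective
        rw [map_add, map_add, ← hzg, heq2, heq]
      have hd := hdistC p (hPsub n hp) l hl
      rw [hw_eq] at hd
      have hnorm : p + g + l - (p + l) = g := by abel
      rw [hnorm] at hd
      linarith
    obtain ⟨f, u, hfa, hfw⟩ := geometric_hahn_banach_closed_point hNconv hNcl hwN
    obtain ⟨x₀, hx₀⟩ := exists_eval_rep f
    have hfw' : u < w x₀ := by
      rw [hx₀] at hfw
      exact hfw
    have hNlt : ∀ p ∈ P n, ∀ g : StrongDual ℝ E, ‖g‖ ≤ ε/2 → ∀ l ∈ LambdaD D,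
        p x₀ + g x₀ + l x₀ < w x₀ := by
      intro p hp g hg l hl
      have hmem : StrongDual.toWeakDual (p + g + l) ∈ Nn := by
        rw [map_add, map_add, hNdef]
        exact Set.add_mem_add (Set.add_mem_add ⟨p, hp, rfl⟩ (hBallmem g hg)) ⟨l, hl, rfl⟩
      have h1 := hfa _ hmem
      rw [hx₀] at h1
      have h2 : (p + g + l) x₀ < u := h1
      have h3 : (p + g + l) x₀ = p x₀ + g x₀ + l x₀ := by
        simp [ContinuousLinearMap.add_apply]
      linarith
    have hx₀ne : x₀ ≠ 0 := by
      intro h0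
      have := hNlt b₀ (hb₀P n) 0 (by rw [norm_zero]; positivity) 0 h0Λ
      rw [h0] at this
      simp at this
    obtain ⟨g₀, hg₀norm, hg₀x⟩ := exists_dual_vector ℝ x₀ (norm_ne_zero_iff.mpr hx₀ne)
    have hg₀x' : g₀ x₀ = ‖x₀‖ := by exact_mod_cast hg₀x
    have hkey : ∀ p ∈ P n, p x₀ + (ε/2) * ‖x₀‖ ≤ w x₀ := by
      intro p hp
      have hgn : ‖(ε/2) • g₀‖ ≤ ε/2 := by
        have h1 : ‖(ε/2) • g₀‖ = ‖(ε/2 : ℝ)‖ * ‖g₀‖ := by exact norm_smul (ε/2) g₀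
        rw [h1, hg₀norm, mul_one, Real.norm_eq_abs, abs_of_pos (half_pos hε)]
      have := hNlt p hp ((ε/2) • g₀) hgn 0 h0Λ
      have happ : ((ε/2) • g₀) x₀ = (ε/2) * ‖x₀‖ := by
        rw [ContinuousLinearMap.smul_apply, hg₀x']
        rfl
      rw [happ] at this
      simp only [ContinuousLinearMap.zero_apply, add_zero] at this
      linarith
    have hwb : b₀ x₀ < w x₀ := by
      have := hNlt b₀ (hb₀P n) 0 (by rw [norm_zero]; positivity) 0 h0Λ
      simpa using this
    have hD0' : ∀ d ∈ D, d x₀ ≤ 0 := by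
      intro d hd
      by_contra hpos
      push_neg at hpos
      set lam := (w x₀ - b₀ x₀) / (d x₀) + 1 with hlam
      have hlampos : 0 < lam := by
        rw [hlam]
        have : 0 < (w x₀ - b₀ x₀) / (d x₀) := by
          apply div_pos (by linarith) hpos
        linarith
      have hl := hNlt b₀ (hb₀P n) 0 (by rw [norm_zero]; positivity) (lam • d)
        (Or.inr ⟨lam, hlampos, d, hd, rfl⟩)
      have hsmul : (lam • d) x₀ = lam * d x₀ := rfl
      rw [hsmul] at hl
      simp only [ContinuousLinearMap.zero_apply, add_zero] at hl
      have hcomp : lam * d x₀ = (w x₀ - b₀ x₀) + d x₀ := by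
        rw [hlam]
        field_simp
      nlinarith
    have hx₀pos : 0 < ‖x₀‖ := norm_pos_iff.mpr hx₀ne
    refine ⟨‖x₀‖⁻¹ • x₀, ?_, ?_, ?_⟩
    · rw [norm_smul, norm_inv, norm_norm, inv_mul_cancel₀ (ne_of_gt hx₀pos)]
    · intro p hp
      have h := hkey p hp
      have hp' : p (‖x₀‖⁻¹ • x₀) = ‖x₀‖⁻¹ * p x₀ := by
        rw [map_smul]; rfl
      have hw' : w (‖x₀‖⁻¹ • x₀) = ‖x₀‖⁻¹ * w x₀ := by
        rw [map_smul]; rfl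
      rw [hp', hw']
      have hinv : ‖x₀‖⁻¹ * (p x₀ + ε/2 * ‖x₀‖) ≤ ‖x₀‖⁻¹ * w x₀ :=
        mul_le_mul_of_nonneg_left h (by positivity)
      have hsimp : ‖x₀‖⁻¹ * (p x₀ + ε/2 * ‖x₀‖) = ‖x₀‖⁻¹ * p x₀ + ε/2 := by
        field_simp
      linarith
    · intro d hd
      have h1 := hD0' d hd
      rw [map_smul]
      have : ‖x₀‖⁻¹ • d x₀ = ‖x₀‖⁻¹ * d x₀ := rfl
      rw [this]
      have := mul_le_mul_of_nonneg_left h1 (inv_nonneg.mpr hx₀pos.le)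
      simpa using this
  choose xs hxs1 hxs2 hxs3 using hsep
  -- bounds of e on P n
  have hsb : ∀ n, ∃ s, ∀ p ∈ P n, p e ≤ s := by
    intro n
    have hcpt : IsCompact ((fun z : WeakDual ℝ E => z e) ''
        (StrongDual.toWeakDual '' P n)) :=
      (hPcpt n).image (WeakDual.eval_continuous e)
    obtain ⟨s, hs⟩ := hcpt.bddAbove
    refine ⟨s, fun p hp => ?_⟩
    exact hs ⟨StrongDual.toWeakDual p, ⟨p, hp, rfl⟩, rfl⟩
  choose sb hsbP using hsb
  -- the perturbed functionals v n
  set δseq : ℕ → ℝ := fun n => min 1 ((ε/4) / (1 + max (sb n - w e) 0)) with hδseqdef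
  have hδseqpos : ∀ n, 0 < δseq n := by
    intro n
    apply lt_min one_pos
    have : (0:ℝ) ≤ max (sb n - w e) 0 := le_max_right _ _
    positivity
  have hδseq1 : ∀ n, δseq n ≤ 1 := fun n => min_le_left _ _
  set v : ℕ → E := fun n => xs n + δseq n • e with hvdef
  have hv1 : ∀ n, ∀ p ∈ P n, p (v n) ≤ w (v n) - ε/4 := by
    intro n p hp
    have h1 : p (v n) = p (xs n) + δseq n * p e := by
      simp [hvdef, map_add, map_smul]
    have h2 : w (v n) = w (xs n) + δseq n * w e := by
      simp [hvdef, map_add, map_smul]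
    have h3 := hxs2 n p hp
    have h4 := hsbP n p hp
    have hM0 : (0:ℝ) ≤ max (sb n - w e) 0 := le_max_right _ _
    have h5 : δseq n * (sb n - w e) ≤ ε/4 := by
      have hle : δseq n ≤ (ε/4) / (1 + max (sb n - w e) 0) := min_le_right _ _
      have h6 : δseq n * (sb n - w e) ≤ δseq n * max (sb n - w e) 0 :=
        mul_le_mul_of_nonneg_left (le_max_left _ _) (hδseqpos n).le
      have h7 : δseq n * max (sb n - w e) 0 ≤
          (ε/4) / (1 + max (sb n - w e) 0) * max (sb n - w e) 0 :=
        mul_le_mul_of_nonneg_right hle hM0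
      have h8 : (ε/4) / (1 + max (sb n - w e) 0) * max (sb n - w e) 0 ≤ ε/4 := by
        rw [div_mul_eq_mul_div, div_le_iff₀ (by positivity)]
        nlinarith
      linarith
    have h9 : δseq n * p e ≤ δseq n * sb n := mul_le_mul_of_nonneg_left h4 (hδseqpos n).le
    rw [mul_sub] at h5
    rw [h1, h2]
    linarith
  have hv2 : ∀ n, ∀ d ∈ D, d (v n) ≤ -(δseq n * δ) := by
    intro n d hd
    have h0 : d (v n) = d (xs n) + δseq n * d e := by
      simp [hvdef, map_add, map_smul]
    rw [h0]
    have h1 := hxs3 n d hd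
    have h2 := hedD d hd
    have h3 : δseq n * d e ≤ δseq n * (-δ) := mul_le_mul_of_nonneg_left h2 (hδseqpos n).le
    linarith
  have hvnorm : ∀ n, ‖v n‖ ≤ 1 + ‖e‖ := by
    intro n
    calc ‖v n‖ ≤ ‖xs n‖ + ‖δseq n • e‖ := norm_add_le _ _
    _ ≤ 1 + ‖e‖ := by
        rw [hxs1 n, norm_smul, Real.norm_eq_abs, abs_of_pos (hδseqpos n)]
        have h1 := hδseq1 n
        have h2 : δseq n * ‖e‖ ≤ 1 * ‖e‖ :=
          mul_le_mul_of_nonneg_right h1 (norm_nonneg e)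
        rw [one_mul] at h2
        linarith
  set M' := 1 + ‖e‖ with hM'def
  have hM'pos : 0 < M' := by positivity
  -- the sets V k
  set V : ℕ → Set E := fun k => closure (convexHull ℝ (v '' Set.Ici k)) with hVdef
  have hVcl : ∀ k, IsClosed (V k) := fun k => isClosed_closure
  have hVconv : ∀ k, Convex ℝ (V k) := fun k => (convex_convexHull ℝ _).closure
  have hVmem : ∀ k n, k ≤ n → v n ∈ V k := fun k n h =>
    subset_closure (subset_convexHull ℝ _ ⟨n, h, rfl⟩)
  have hVmono : ∀ k l, k ≤ l → V l ⊆ V k := fun k l h =>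
    closure_mono (convexHull_mono (Set.image_mono (Set.Ici_subset_Ici.mpr h)))
  have hVne : ∀ k, (V k).Nonempty := fun k => ⟨v k, hVmem k k le_rfl⟩
  have hVnorm : ∀ k, ∀ z ∈ V k, ‖z‖ ≤ M' := by
    intro k z hz
    have hsub : V k ⊆ Metric.closedBall 0 M' := by
      apply closure_minimal ?_ Metric.isClosed_closedBall
      apply convexHull_min ?_ (convex_closedBall 0 M')
      rintro _ ⟨n, _, rfl⟩
      rw [Metric.mem_closedBall, dist_zero_right]
      exact hvnorm n
    have := hsub hz
    rwa [Metric.mem_closedBall, dist_zero_right] at this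
  have hVle : ∀ (g : StrongDual ℝ E) (c : ℝ) (k : ℕ),
      (∀ n, k ≤ n → g (v n) ≤ c) → ∀ z ∈ V k, g z ≤ c := by
    intro g c k hgen z hz
    have hlin : IsLinearMap ℝ (fun z : E => g z) := ⟨g.map_add, g.map_smul⟩
    have hsub : V k ⊆ {z : E | g z ≤ c} := by
      apply closure_minimal ?_ (isClosed_le g.continuous continuous_const)
      apply convexHull_min ?_ (convex_halfSpace_le hlin c)
      rintro _ ⟨n, hn, rfl⟩
      exact hgen n hn
    exact hsub hz
  have hVD : ∀ k, ∀ z ∈ V k, ∀ d ∈ D, d z ≤ 0 := by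
    intro k z hz d hd
    refine hVle d 0 k (fun n _ => ?_) z hz
    have h1 := hv2 n d hd
    have h2 : 0 < δseq n * δ := mul_pos (hδseqpos n) hδpos
    linarith
  -- the attainment machinery
  have hatt : ∀ z : E, (D.Nonempty → ∃ r < (0:ℝ), ∀ d ∈ D, d z ≤ r) →
      ∃ bb ∈ B, ∀ y ∈ B, y z ≤ bb z := by
    intro z hz
    rcases D.eq_empty_or_nonempty with hD | hD
    · by_cases hz0 : z = 0
      · exact ⟨b₀, hb₀, fun y _ => by simp [hz0]⟩
      · exact hbd z (Or.inl ⟨hD, hz0⟩)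
    · exact hbd z (Or.inr ⟨hD, hz hD⟩)
  obtain ⟨b₁, hb₁B, hb₁max⟩ := hatt (v 0)
    (fun _ => ⟨-(δseq 0 * δ), by linarith [mul_pos (hδseqpos 0) hδpos], hv2 0⟩)
  set κ₁ := max (b₁ (v 0) - w (v 0)) 0 with hκdef
  have hκ₁0 : 0 ≤ κ₁ := le_max_right _ _
  have hκ₁ : ∀ bb ∈ B, bb (v 0) - w (v 0) ≤ κ₁ := by
    intro bb hbb
    have := hb₁max bb hbb
    have h2 := le_max_left (b₁ (v 0) - w (v 0)) 0
    rw [hκdef]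
    linarith
  set θ := min (1/2 : ℝ) (ε / (32 * (κ₁ + 1))) with hθdef
  have hθpos : 0 < θ := lt_min (by norm_num) (by positivity)
  have hθhalf : θ ≤ 1/2 := min_le_left _ _
  have hθκ : 2 * θ * κ₁ ≤ ε / 16 := by
    have h := min_le_right (1/2 : ℝ) (ε / (32 * (κ₁ + 1)))
    have h' : θ * (32 * (κ₁ + 1)) ≤ ε := by
      rw [← le_div_iff₀ (by positivity)]
      exact h
    nlinarith
  set η := ε / 64 with hηdef
  have hηpos : 0 < η := by positivity
  set ψ : E → E := fun ζ => (1-θ) • ζ + θ • (v 0) with hψdef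
  have hψD : ∀ ζ ∈ V 0, D.Nonempty → ∃ r < (0:ℝ), ∀ d ∈ D, d (ψ ζ) ≤ r := by
    intro ζ hζ _
    refine ⟨-(θ * (δseq 0 * δ)), by linarith [mul_pos hθpos (mul_pos (hδseqpos 0) hδpos)], ?_⟩
    intro d hd
    have h1 : d (ψ ζ) = (1-θ) * d ζ + θ * d (v 0) := by
      simp [hψdef, map_add, map_smul]
    rw [h1]
    have h2 := hVD 0 ζ hζ d hd
    have h3 := hv2 0 d hd
    nlinarith
  have hGB : ∀ ζ : E, ∃ bb, bb ∈ B ∧ (ζ ∈ V 0 → ∀ y ∈ B, y (ψ ζ) ≤ bb (ψ ζ)) := by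
    intro ζ
    by_cases hζ : ζ ∈ V 0
    · obtain ⟨bb, hbbB, hbbmax⟩ := hatt (ψ ζ) (hψD ζ hζ)
      exact ⟨bb, hbbB, fun _ => hbbmax⟩
    · exact ⟨b₀, hb₀, fun h => absurd h hζ⟩
  choose Gb hGbB hGbmax using hGB
  set q : E → ℝ := fun ζ => max (Gb ζ (ψ ζ) - w (ψ ζ)) 0 with hqdef
  have hq0 : ∀ ζ, 0 ≤ q ζ := fun ζ => le_max_right _ _
  have hqge : ∀ ζ ∈ V 0, ∀ y ∈ B, y (ψ ζ) - w (ψ ζ) ≤ q ζ := by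
    intro ζ hζ y hy
    have h1 := hGbmax ζ hζ y hy
    have h2 := le_max_left (Gb ζ (ψ ζ) - w (ψ ζ)) 0
    rw [hqdef]
    simp only []
    linarith
  have hqeq : ∀ ζ ∈ V 0, q ζ = Gb ζ (ψ ζ) - w (ψ ζ) := by
    intro ζ hζ
    have hwle : w (ψ ζ) ≤ Gb ζ (ψ ζ) := hWmaj (ψ ζ) _ (hGbmax ζ hζ)
    exact max_eq_left (by linarith)
  -- the recursive selection
  have hsel : ∀ (S : E) (k : ℕ), ∃ uu, uu ∈ V k ∧ ∀ τ ∈ V k,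
      q (S + (1/2:ℝ)^k • uu) ≤ q (S + (1/2:ℝ)^k • τ) + η * (1/4)^(k+1) := by
    intro S k
    set T := (fun τ : E => q (S + (1/2:ℝ)^k • τ)) '' V k with hTdef
    have hTne : T.Nonempty := (hVne k).image _
    have hTbdd : BddBelow T := ⟨0, by rintro t ⟨τ, hτ, rfl⟩; exact hq0 _⟩
    have hlt : sInf T < sInf T + η * (1/4)^(k+1) := by
      have : (0:ℝ) < η * (1/4)^(k+1) := by positivity
      linarith
    obtain ⟨t0, ht0T, ht0lt⟩ := exists_lt_of_csInf_lt hTne hlt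
    obtain ⟨uu, huu, rfl⟩ := ht0T
    refine ⟨uu, huu, fun τ hτ => ?_⟩
    have h1 : sInf T ≤ q (S + (1/2:ℝ)^k • τ) := csInf_le hTbdd ⟨τ, hτ, rfl⟩
    linarith
  choose sel hselV hselq using hsel
  set uS : ℕ → E × E := fun k => Nat.rec (motive := fun _ => E × E)
      (⟨sel 0 0, (1/2:ℝ)^(0+1) • sel 0 0⟩)
      (fun k p => ⟨sel p.2 (k+1), p.2 + (1/2:ℝ)^(k+1+1) • sel p.2 (k+1)⟩) k with huSdef
  set u : ℕ → E := fun k => (uS k).1 with hudef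
  set Sp : ℕ → E := fun k => Nat.rec (motive := fun _ => E) (0:E) (fun k _ => (uS k).2) k
    with hSpdef
  have hSp0 : Sp 0 = 0 := rfl
  have hueq : ∀ k, u k = sel (Sp k) k := by
    intro k
    cases k with
    | zero => rfl
    | succ k => rfl
  have hSrec : ∀ k, Sp (k+1) = Sp k + (1/2:ℝ)^(k+1) • u k := by
    intro k
    cases k with
    | zero =>
      show (uS 0).2 = Sp 0 + (1/2:ℝ)^(0+1) • u 0
      rw [hSp0, zero_add]
      rfl
    | succ k =>
      show (uS (k+1)).2 = Sp (k+1) + (1/2:ℝ)^(k+1+1) • u (k+1)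
      rfl
  have huV : ∀ k, u k ∈ V k := by
    intro k
    rw [hueq k]
    exact hselV _ k
  have hselq' : ∀ k, ∀ τ ∈ V k, q (Sp k + (1/2:ℝ)^k • u k) ≤
      q (Sp k + (1/2:ℝ)^k • τ) + η * (1/4)^(k+1) := by
    intro k
    rw [hueq k]
    exact hselq (Sp k) k
  -- the series
  have hsummand : ∀ (k l : ℕ), ‖(1/2:ℝ)^(k+1) • u (k + l)‖ ≤ (M'/2) * (1/2)^k := by
    intro k l
    rw [norm_smul, Real.norm_eq_abs, abs_of_pos (by positivity)]
    have h2 := hVnorm (k+l) (u (k+l)) (huV (k+l))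
    have h3 : (0:ℝ) < (1/2)^k := by positivity
    have h4 : (1/2:ℝ)^(k+1) = (1/2)^k * (1/2) := pow_succ _ _
    rw [h4]
    nlinarith
  have hgeosum : Summable (fun k : ℕ => (M'/2) * (1/2:ℝ)^k) :=
    (summable_geometric_two).mul_left (M'/2)
  have hsumu : ∀ l : ℕ, Summable (fun k => (1/2:ℝ)^(k+1) • u (k + l)) := by
    intro l
    apply Summable.of_norm_bounded hgeosum (fun k => hsummand k l)
  have hgeom1 : ∑' j : ℕ, (1/2:ℝ)^(j+1) = 1 := by
    have h : ∀ j : ℕ, (1/2:ℝ)^(j+1) = (1/2)^j * (1/2) := fun j => pow_succ _ _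
    rw [tsum_congr h, tsum_mul_right, tsum_geometric_two]
    norm_num
  have hsumgeo : Summable (fun j : ℕ => (1/2:ℝ)^(j+1)) := by
    have h : ∀ j : ℕ, (1/2:ℝ)^(j+1) = (1/2)^j * (1/2) := fun j => pow_succ _ _
    rw [funext h]
    exact summable_geometric_two.mul_right _
  set uInf := ∑' k, (1/2:ℝ)^(k+1) • u k with huInfdef
  have hSp_sum : ∀ k, Sp k = ∑ j ∈ Finset.range k, (1/2:ℝ)^(j+1) • u j := by
    intro k
    induction k with
    | zero => simp [hSp0]
    | succ k ih => rw [hSrec k, ih, Finset.sum_range_succ]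
  have htailmem : ∀ k, ∃ τ ∈ V k, uInf = Sp k + (1/2:ℝ)^k • τ := by
    intro k
    set τ := ∑' j, (1/2:ℝ)^(j+1) • u (j+k) with hτdef
    have hτV : τ ∈ V k := by
      apply tsum_smul_mem_of_closed_convex (hVconv k) (hVcl k)
        (fun j => hVmono k (j+k) (by omega) (huV (j+k)))
        (fun j => by positivity) hsumgeo hgeom1 (hsumu k)
    refine ⟨τ, hτV, ?_⟩
    have hsplit := Summable.sum_add_tsum_nat_add (f := fun j => (1/2:ℝ)^(j+1) • u j) k (hsumu 0)
    have hsmul : (1/2:ℝ)^k • τ = ∑' j, (1/2:ℝ)^(j+k+1) • u (j+k) := by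
      rw [hτdef, ← Summable.tsum_const_smul ((1/2:ℝ)^k) (hsumu k)]
      apply tsum_congr
      intro j
      rw [smul_smul, ← pow_add]
      congr 2
      omega
    rw [huInfdef, hSp_sum k, hsmul]
    rw [← hsplit]
  have huInfV : uInf ∈ V 0 := by
    obtain ⟨τ, hτ, heq⟩ := htailmem 0
    rw [heq, hSp0]
    simpa using hτ
  -- the maximizer b at uInf
  set b := Gb uInf with hbdef
  have hbB : b ∈ B := hGbB uInf
  set φ : StrongDual ℝ E := b - w with hφdef
  have hφapp : ∀ z : E, φ z = b z - w z := fun z => rfl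
  set β : ℕ → ℝ := fun j => φ (u j) with hβdef
  have hφψ : ∀ z : E, φ (ψ z) = (1-θ) * φ z + θ * φ (v 0) := by
    intro z
    simp [hψdef, map_add, map_smul]
  have hqInfeq : q uInf = φ (ψ uInf) := by
    rw [hqeq uInf huInfV]
    rfl
  -- the convex-combination membership
  have hSpV : ∀ k, ∀ τ ∈ V k, Sp k + (1/2:ℝ)^k • τ ∈ V 0 := by
    intro k
    induction k with
    | zero =>
      intro τ hτ
      rw [hSp0]
      simpa using hτ
    | succ k ih =>
      intro τ hτ
      have hmid : (1/2:ℝ) • u k + (1/2:ℝ) • τ ∈ V k := by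
        apply (hVconv k) (huV k) (hVmono k (k+1) (by omega) hτ) (by norm_num) (by norm_num)
          (by norm_num)
      have hres := ih _ hmid
      have heq2 : Sp (k+1) + (1/2:ℝ)^(k+1) • τ =
          Sp k + (1/2:ℝ)^k • ((1/2:ℝ) • u k + (1/2:ℝ) • τ) := by
        rw [hSrec k, smul_add, smul_smul, smul_smul, ← pow_succ]
        abel
      rw [heq2]
      exact hres
  -- the key inequality
  have hkey : ∀ k, (1-θ) * (φ (Sp k) + (1/2:ℝ)^k * β k) ≤
      (1-θ) * φ uInf + η * (1/4)^(k+1) := by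
    intro k
    obtain ⟨τ, hτ, heqt⟩ := htailmem k
    have h1 := hselq' k τ hτ
    rw [← heqt] at h1
    have hzV : Sp k + (1/2:ℝ)^k • u k ∈ V 0 := hSpV k (u k) (huV k)
    have h2 : φ (ψ (Sp k + (1/2:ℝ)^k • u k)) ≤ q (Sp k + (1/2:ℝ)^k • u k) := by
      have := hqge _ hzV b hbB
      rw [← hφapp] at this
      exact this
    have h4 : φ (ψ (Sp k + (1/2:ℝ)^k • u k)) =
        (1-θ) * (φ (Sp k) + (1/2:ℝ)^k * β k) + θ * φ (v 0) := by
      rw [hφψ, map_add, map_smul]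
      simp [hβdef, smul_eq_mul]
    have h5 : φ (ψ uInf) = (1-θ) * φ uInf + θ * φ (v 0) := hφψ uInf
    rw [h4] at h2
    rw [hqInfeq, h5] at h1
    linarith
  -- the scalar series
  have hβbdd : ∀ j, |β j| ≤ ‖φ‖ * M' := by
    intro j
    have h1 : ‖φ (u j)‖ ≤ ‖φ‖ * ‖u j‖ := φ.le_opNorm (u j)
    rw [Real.norm_eq_abs] at h1
    have h2 := hVnorm j (u j) (huV j)
    have h3 : ‖φ‖ * ‖u j‖ ≤ ‖φ‖ * M' := mul_le_mul_of_nonneg_left h2 (norm_nonneg φ)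
    exact le_trans h1 h3
  have hβsummand : Summable (fun j => (1/2:ℝ)^(j+1) * β j) := by
    apply Summable.of_norm_bounded ((summable_geometric_two).mul_left ((‖φ‖ * M')/2))
    intro j
    rw [Real.norm_eq_abs, abs_mul, abs_of_pos (show (0:ℝ) < (1/2)^(j+1) by positivity)]
    have h1 := hβbdd j
    have h2 : (0:ℝ) < (1/2)^(j+1) := by positivity
    have h3 : (1/2:ℝ)^(j+1) = (1/2)^j * (1/2) := pow_succ _ _
    have h4 : (0:ℝ) < (1/2)^j := by positivity
    rw [h3]
    have h5 := mul_le_mul_of_nonneg_left h1 h4.le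
    linarith
  have hsumu0 : Summable (fun k : ℕ => (1/2:ℝ)^(k+1) • u k) := hsumu 0
  have hφuInf : φ uInf = ∑' j, (1/2:ℝ)^(j+1) * β j := by
    rw [huInfdef, φ.map_tsum hsumu0]
    apply tsum_congr
    intro j
    rw [map_smul]
    simp [hβdef, smul_eq_mul]
  have hφSp : ∀ m, φ (Sp m) = ∑ j ∈ Finset.range m, (1/2:ℝ)^(j+1) * β j := by
    intro m
    rw [hSp_sum m, map_sum]
    apply Finset.sum_congr rfl
    intro j _
    rw [map_smul]
    simp [hβdef, smul_eq_mul]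
  -- the sup sequence σ
  set σ : ℕ → ℝ := fun m => sSup (β '' Set.Ici m) with hσdef
  have hσbdd : ∀ m, BddAbove (β '' Set.Ici m) := by
    intro m
    refine ⟨‖φ‖ * M', ?_⟩
    rintro _ ⟨j, _, rfl⟩
    exact le_trans (le_abs_self _) (hβbdd j)
  have hσne : ∀ m, (β '' Set.Ici m).Nonempty := fun m => ⟨β m, m, Set.self_mem_Ici, rfl⟩
  have hσub : ∀ m j, m ≤ j → β j ≤ σ m := fun m j h => le_csSup (hσbdd m) ⟨j, Set.mem_Ici.mpr h, rfl⟩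
  have hσle : ∀ m c, (∀ j, m ≤ j → β j ≤ c) → σ m ≤ c := by
    intro m c h
    apply csSup_le (hσne m)
    rintro _ ⟨j, hj, rfl⟩
    exact h j hj
  have hσmono : ∀ m l, m ≤ l → σ l ≤ σ m := fun m l h =>
    csSup_le_csSup (hσbdd m) (hσne l) (Set.image_mono (Set.Ici_subset_Ici.mpr h))
  -- the tail estimate
  have hβk : ∀ k, β k ≤ σ (k+1) + η * (1/2:ℝ)^k := by
    intro k
    have h1 := hkey k
    have hθ1 : (1/2:ℝ) ≤ 1 - θ := by linarith
    have h2 : φ (Sp k) + (1/2:ℝ)^k * β k ≤ φ uInf + 2 * (η * (1/4)^(k+1)) := by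
      rcases le_or_gt (φ (Sp k) + (1/2:ℝ)^k * β k) (φ uInf) with hc | hc
      · have ht : (0:ℝ) ≤ 2*(η * (1/4:ℝ)^(k+1)) := by positivity
        linarith
      · nlinarith
    have hsplit := Summable.sum_add_tsum_nat_add (f := fun j => (1/2:ℝ)^(j+1) * β j) (k+1) hβsummand
    have hsum1 : Summable (fun j => (1/2:ℝ)^(j+(k+1)+1) * β (j+(k+1))) := by
      have := (summable_nat_add_iff (k+1)).mpr hβsummand
      simpa using this
    have hgeoshift : ∑' j : ℕ, (1/2:ℝ)^(j+(k+1)+1) = (1/2)^(k+1) := by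
      have hcongr : ∀ j : ℕ, (1/2:ℝ)^(j+(k+1)+1) = (1/2)^j * (1/2)^(k+2) := by
        intro j
        ring
      rw [tsum_congr hcongr, tsum_mul_right, tsum_geometric_two]
      rw [pow_succ]
      ring
    have hsum2 : Summable (fun j : ℕ => (1/2:ℝ)^(j+(k+1)+1) * σ (k+1)) := by
      apply Summable.mul_right
      have hcongr : ∀ j : ℕ, (1/2:ℝ)^(j+(k+1)+1) = (1/2)^j * (1/2)^(k+2) := by
        intro j
        ring
      rw [funext hcongr]
      exact summable_geometric_two.mul_right _
    have hT : (∑' j, (1/2:ℝ)^(j+(k+1)+1) * β (j+(k+1))) ≤ (1/2)^(k+1) * σ (k+1) := by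
      have hle := Summable.tsum_le_tsum (f := fun j => (1/2:ℝ)^(j+(k+1)+1) * β (j+(k+1)))
        (g := fun j => (1/2:ℝ)^(j+(k+1)+1) * σ (k+1)) ?_ hsum1 hsum2
      · calc (∑' j, (1/2:ℝ)^(j+(k+1)+1) * β (j+(k+1)))
            ≤ ∑' j, (1/2:ℝ)^(j+(k+1)+1) * σ (k+1) := hle
        _ = (∑' j, (1/2:ℝ)^(j+(k+1)+1)) * σ (k+1) := tsum_mul_right
        _ = (1/2)^(k+1) * σ (k+1) := by rw [hgeoshift]
      · intro j
        exact mul_le_mul_of_nonneg_left (hσub (k+1) (j+(k+1)) (by omega)) (by positivity)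
    have hc1 : φ uInf = φ (Sp (k+1)) + ∑' j, (1/2:ℝ)^(j+(k+1)+1) * β (j+(k+1)) := by
      rw [hφuInf, ← hsplit, hφSp (k+1)]
    have hc2 : φ (Sp (k+1)) = φ (Sp k) + (1/2:ℝ)^(k+1) * β k := by
      rw [hSrec k, map_add, map_smul]
      simp [hβdef, smul_eq_mul]
    have hpow : (1/2:ℝ)^k - (1/2)^(k+1) = (1/2)^(k+1) := by
      rw [pow_succ]
      ring
    have e2 : φ uInf ≤ φ (Sp k) + (1/2:ℝ)^(k+1) * β k + (1/2)^(k+1) * σ (k+1) := by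
      rw [hc1, hc2]
      linarith [hT]
    have hpow2 : (1/2:ℝ)^(k+1) + (1/2)^(k+1) = (1/2)^k := by
      rw [pow_succ]; ring
    have e4 : (1/2:ℝ)^k * β k = (1/2)^(k+1) * β k + (1/2)^(k+1) * β k := by
      rw [← add_mul, hpow2]
    have hgoal2 : (1/2:ℝ)^(k+1) * β k ≤ (1/2)^(k+1) * σ (k+1) + 2*(η * (1/4)^(k+1)) := by
      linarith [h2, e2, e4]
    have hq4 : 2*(η * (1/4:ℝ)^(k+1)) = (1/2)^(k+1) * (η * (1/2)^k) := by
      rw [show (1/4:ℝ) = (1/2)*(1/2) by norm_num, mul_pow]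
      rw [pow_succ]
      ring
    rw [hq4, ← mul_add] at hgoal2
    have hppos : (0:ℝ) < (1/2)^(k+1) := by positivity
    exact le_of_mul_le_mul_left hgoal2 hppos
  -- iterating the sup estimate
  have hσstep : ∀ m, σ m ≤ σ (m+1) + η * (1/2:ℝ)^m := by
    intro m
    apply hσle
    intro j hj
    have h0 := hβk j
    have h1 : σ (j+1) ≤ σ (m+1) := hσmono (m+1) (j+1) (by omega)
    have h2 : (1/2:ℝ)^j ≤ (1/2)^m := pow_le_pow_of_le_one (by norm_num) (by norm_num) hj
    nlinarith
  have hσ0m : ∀ m, σ 0 ≤ σ m + η * (2 - 2 * (1/2:ℝ)^m) := by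
    intro m
    induction m with
    | zero => simp
    | succ m ih =>
      have h1 := hσstep m
      have hrw : η * (2 - 2*(1/2:ℝ)^(m+1)) = η * (2 - (1/2)^m) := by
        rw [pow_succ]
        ring
      rw [hrw]
      have h2 : η * (2 - 2 * (1/2:ℝ)^m) + η * (1/2)^m = η * (2 - (1/2)^m) := by ring
      linarith
  have hσ0 : ∀ m, σ 0 ≤ σ m + 2*η := by
    intro m
    have h1 := hσ0m m
    have h2 : (0:ℝ) ≤ (1/2)^m := by positivity
    nlinarith
  -- upper bound for φ uInf
  have hsumσ : Summable (fun j : ℕ => (1/2:ℝ)^(j+1) * σ 0) :=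
    hsumgeo.mul_right _
  have hφσ : φ uInf ≤ σ 0 := by
    rw [hφuInf]
    have h1 : ∀ j, (1/2:ℝ)^(j+1) * β j ≤ (1/2)^(j+1) * σ 0 :=
      fun j => mul_le_mul_of_nonneg_left (hσub 0 j (by omega)) (by positivity)
    calc (∑' j, (1/2:ℝ)^(j+1) * β j) ≤ ∑' j, (1/2:ℝ)^(j+1) * σ 0 :=
        Summable.tsum_le_tsum h1 hβsummand hsumσ
    _ = (∑' j, (1/2:ℝ)^(j+1)) * σ 0 := tsum_mul_right
    _ = σ 0 := by rw [hgeom1, one_mul]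
  -- lower bound for φ uInf
  have hqInfval : 0 ≤ (1-θ) * φ uInf + θ * φ (v 0) := by
    have h := hq0 uInf
    rw [hqInfeq, hφψ] at h
    exact h
  have hφv0 : φ (v 0) ≤ κ₁ := by
    rw [hφapp]
    exact hκ₁ b hbB
  have hlb : -(2*θ*κ₁) ≤ φ uInf := by
    rcases le_or_gt 0 (φ uInf) with h | h
    · nlinarith
    · nlinarith [mul_le_mul_of_nonneg_left hφv0 hθpos.le]
  -- the decisive upper bound
  obtain ⟨mb, hmb⟩ : ∃ m, b ∈ K m := by simpa using hcover hbB
  have hσmb : σ mb ≤ -(ε/4) := by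
    apply hσle
    intro j hj
    have hgen : ∀ n, j ≤ n → φ (v n) ≤ -(ε/4) := by
      intro n hn
      have hbP : b ∈ P n := hKP mb n (by omega) hmb
      have h1 := hv1 n b hbP
      rw [hφapp]
      linarith
    exact hVle φ (-(ε/4)) j hgen (u j) (huV j)
  -- contradiction
  have hfinal1 : -(2*θ*κ₁) ≤ -(ε/4) + 2*η := by
    calc -(2*θ*κ₁) ≤ φ uInf := hlb
    _ ≤ σ 0 := hφσ
    _ ≤ σ mb + 2*η := hσ0 mb
    _ ≤ -(ε/4) + 2*η := by linarith
  rw [hηdef] at hfinal1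
  linarith
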